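/- Fix n ≥ 3 and suppose some α_i ≠ 0 (4 ≤ i ≤ n) or ((n-3)θ ≠ 0). Then every even derivation of the Leibniz superalgebra L(α₄,…,α_n,θ) is nilpotent as a linear operator. Consequently, there is no non-nilpotent solvable Leibniz superalgebra whose nilradical is L(α₄,…,α_n,θ) unless α₄ = ⋯ = α_n = θ = 0. -/

import Mathlib

open Finset

private lemma sum_shift1 {M : Type*} [AddCommMonoid M] (a b : ℕ) (f : ℕ → M) :
    ∑ m ∈ Finset.Icc a b, f (m + 1) = ∑ m ∈ Finset.Icc (a+1) (b+1), f m := by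
  rw [← Finset.map_add_right_Icc a b 1, Finset.sum_map]
  rfl

private lemma fin_sum_icc {M : Type*} [AddCommMonoid M] (N : ℕ) (g : ℕ → M) :
    ∑ j : Fin N, g (j + 1) = ∑ j ∈ Finset.Icc 1 N, g j := by
  induction N with
  | zero => simp
  | succ N ih =>
    rw [Fin.sum_univ_castSucc]
    simp only [Fin.coe_castSucc, Fin.val_last]
    rw [ih, Finset.sum_Icc_succ_top (by omega : 1 ≤ N+1)]

private lemma swap_sum (s t : Finset ℕ) (f g : ℕ → ℂ) (P : ℕ → ℕ → ℂ) :
    ∑ m ∈ s, f m * (∑ k ∈ t, g k * P m k) = ∑ k ∈ t, g k * (∑ m ∈ s, f m * P m k) := by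
  simp_rw [Finset.mul_sum]
  rw [Finset.sum_comm]
  refine Finset.sum_congr rfl fun k _ => Finset.sum_congr rfl fun m _ => by ring

set_option maxHeartbeats 1000000 in
/-- If some α_i ≠ 0 (4 ≤ i ≤ n) or (n-3)θ ≠ 0, then every even derivation of
L(α₄,…,α_n,θ) is nilpotent. -/
theorem statement8 {V : Type*} [AddCommGroup V] [Module ℂ V]
    (n : ℕ) (hn : 3 ≤ n) (α : ℕ → ℂ) (θ : ℂ)
    (bas : Module.Basis (Fin n ⊕ Fin (n - 1)) ℂ V)
    (eN yN : ℕ → V)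
    (heN : ∀ k (h : 1 ≤ k ∧ k ≤ n), eN k = bas (Sum.inl ⟨k - 1, by omega⟩))
    (heN0 : ∀ k, ¬(1 ≤ k ∧ k ≤ n) → eN k = 0)
    (hyN : ∀ k (h : 1 ≤ k ∧ k ≤ n - 1), yN k = bas (Sum.inr ⟨k - 1, by omega⟩))
    (hyN0 : ∀ k, ¬(1 ≤ k ∧ k ≤ n - 1) → yN k = 0)
    (br : V →ₗ[ℂ] V →ₗ[ℂ] V)
    -- multiplication table (1):
    (hee1 : ∀ i, 1 ≤ i → i ≤ n → br (eN i) (eN 1) = if i = 1 then eN 3 else eN (i + 1))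
    (hee2a : br (eN 1) (eN 2) = (∑ k ∈ Finset.Icc 4 (n - 1), α k • eN k) + θ • eN n)
    (hee2b : ∀ i, 2 ≤ i → i ≤ n →
      br (eN i) (eN 2) = ∑ k ∈ Finset.Icc 4 n, α k • eN (i + k - 2))
    (hee0 : ∀ i j, 1 ≤ i → i ≤ n → 3 ≤ j → j ≤ n → br (eN i) (eN j) = 0)
    (hye1 : ∀ j, 1 ≤ j → j ≤ n - 1 → br (yN j) (eN 1) = yN (j + 1))
    (hye2a : br (yN 1) (eN 2) =
      (∑ k ∈ Finset.Icc 4 (n - 1), α k • yN (k - 1)) + θ • yN (n - 1))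
    (hye2b : ∀ j, 2 ≤ j → j ≤ n - 1 →
      br (yN j) (eN 2) = ∑ k ∈ Finset.Icc 4 n, α k • yN (j + k - 2))
    (hye0 : ∀ j i, 1 ≤ j → j ≤ n - 1 → 3 ≤ i → i ≤ n → br (yN j) (eN i) = 0)
    (hey1 : ∀ i, 1 ≤ i → i ≤ n →
      br (eN i) (yN 1) = if i = 1 then (1 / 2 : ℂ) • yN 2 else (1 / 2 : ℂ) • yN i)
    (hey0 : ∀ i j, 1 ≤ i → i ≤ n → 2 ≤ j → j ≤ n - 1 → br (eN i) (yN j) = 0)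
    (hyy1 : ∀ j, 1 ≤ j → j ≤ n - 1 →
      br (yN j) (yN 1) = if j = 1 then eN 1 else eN (j + 1))
    (hyy0 : ∀ j k, 1 ≤ j → j ≤ n - 1 → 2 ≤ k → k ≤ n - 1 → br (yN j) (yN k) = 0)
    -- d is an even derivation:
    (d : Module.End ℂ V)
    (hdE : ∀ x ∈ Submodule.span ℂ (Set.range fun i : Fin n => bas (Sum.inl i)),
      d x ∈ Submodule.span ℂ (Set.range fun i : Fin n => bas (Sum.inl i)))
    (hdY : ∀ x ∈ Submodule.span ℂ (Set.range fun j : Fin (n - 1) => bas (Sum.inr j)),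
      d x ∈ Submodule.span ℂ (Set.range fun j : Fin (n - 1) => bas (Sum.inr j)))
    (hder : ∀ u v : V, d (br u v) = br (d u) v + br u (d v))
    (hnz : (∃ i, 4 ≤ i ∧ i ≤ n ∧ α i ≠ 0) ∨ ((n : ℂ) - 3) * θ ≠ 0) :
    ∃ N : ℕ, d ^ N = 0 := by
  classical
  -- n ≥ 4
  have hn4 : 4 ≤ n := by
    by_contra h
    have hn3 : n = 3 := by omega
    subst hn3
    rcases hnz with ⟨i, h1, h2, _⟩ | h
    · omega
    · apply h; norm_num
  -- basic vanishing
  have eN0 : ∀ k, n < k → eN k = 0 := fun k h => heN0 k (by omega)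
  have yN0 : ∀ k, n - 1 < k → yN k = 0 := fun k h => hyN0 k (by omega)
  -- bracket helpers (unconditional versions)
  have brE1 : ∀ i, 2 ≤ i → br (eN i) (eN 1) = eN (i + 1) := by
    intro i hi
    by_cases h : i ≤ n
    · rw [hee1 i (by omega) h, if_neg (by omega)]
    · rw [heN0 i (by omega), eN0 (i+1) (by omega), map_zero, LinearMap.zero_apply]
  have brYE1 : ∀ j, 1 ≤ j → br (yN j) (eN 1) = yN (j + 1) := by
    intro j hj
    by_cases h : j ≤ n - 1
    · exact hye1 j hj h
    · rw [hyN0 j (by omega), yN0 (j+1) (by omega), map_zero, LinearMap.zero_apply]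
  have brEhi : ∀ i j, 3 ≤ j → br (eN i) (eN j) = 0 := by
    intro i j hj
    by_cases hi : 1 ≤ i ∧ i ≤ n
    · by_cases h : j ≤ n
      · exact hee0 i j hi.1 hi.2 hj h
      · rw [eN0 j (by omega), map_zero]
    · rw [heN0 i hi, map_zero, LinearMap.zero_apply]
  have brYhi : ∀ j i, 3 ≤ i → br (yN j) (eN i) = 0 := by
    intro j i hi
    by_cases hj : 1 ≤ j ∧ j ≤ n - 1
    · by_cases h : i ≤ n
      · exact hye0 j i hj.1 hj.2 hi h
      · rw [eN0 i (by omega), map_zero]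
    · rw [hyN0 j hj, map_zero, LinearMap.zero_apply]
  have brEY0 : ∀ i m, 2 ≤ m → br (eN i) (yN m) = 0 := by
    intro i m hm
    by_cases hi : 1 ≤ i ∧ i ≤ n
    · by_cases h : m ≤ n - 1
      · exact hey0 i m hi.1 hi.2 hm h
      · rw [yN0 m (by omega), map_zero]
    · rw [heN0 i hi, map_zero, LinearMap.zero_apply]
  have brYY0 : ∀ j m, 2 ≤ m → br (yN j) (yN m) = 0 := by
    intro j m hm
    by_cases hj : 1 ≤ j ∧ j ≤ n - 1
    · by_cases h : m ≤ n - 1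
      · exact hyy0 j m hj.1 hj.2 hm h
      · rw [yN0 m (by omega), map_zero]
    · rw [hyN0 j hj, map_zero, LinearMap.zero_apply]
  -- coordinate functionals
  have coordE : ∀ r, 1 ≤ r → r ≤ n → ∃ φ : V →ₗ[ℂ] ℂ,
      (∀ s, φ (eN s) = if s = r then 1 else 0) ∧ (∀ s, φ (yN s) = 0) := by
    intro r h1 h2
    refine ⟨bas.coord (Sum.inl ⟨r-1, by omega⟩), ?_, ?_⟩
    · intro s
      by_cases hs : 1 ≤ s ∧ s ≤ n
      · rw [heN s hs, Module.Basis.coord_apply, Module.Basis.repr_self, Finsupp.single_apply]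
        have : (Sum.inl ⟨s-1, by omega⟩ : Fin n ⊕ Fin (n-1)) = Sum.inl ⟨r-1, by omega⟩ ↔ s = r := by
          simp only [Sum.inl.injEq, Fin.mk.injEq]
          omega
        rw [if_congr this rfl rfl]
      · rw [heN0 s hs, map_zero, if_neg (by omega)]
    · intro s
      by_cases hs : 1 ≤ s ∧ s ≤ n - 1
      · rw [hyN s hs, Module.Basis.coord_apply, Module.Basis.repr_self, Finsupp.single_apply,
          if_neg (by simp)]
      · rw [hyN0 s hs, map_zero]
  have coordY : ∀ r, 1 ≤ r → r ≤ n - 1 → ∃ φ : V →ₗ[ℂ] ℂ,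
      (∀ s, φ (yN s) = if s = r then 1 else 0) ∧ (∀ s, φ (eN s) = 0) := by
    intro r h1 h2
    refine ⟨bas.coord (Sum.inr ⟨r-1, by omega⟩), ?_, ?_⟩
    · intro s
      by_cases hs : 1 ≤ s ∧ s ≤ n - 1
      · rw [hyN s hs, Module.Basis.coord_apply, Module.Basis.repr_self, Finsupp.single_apply]
        have : (Sum.inr ⟨s-1, by omega⟩ : Fin n ⊕ Fin (n-1)) = Sum.inr ⟨r-1, by omega⟩ ↔ s = r := by
          simp only [Sum.inr.injEq, Fin.mk.injEq]
          omega
        rw [if_congr this rfl rfl]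
      · rw [hyN0 s hs, map_zero, if_neg (by omega)]
    · intro s
      by_cases hs : 1 ≤ s ∧ s ≤ n
      · rw [heN s hs, Module.Basis.coord_apply, Module.Basis.repr_self, Finsupp.single_apply,
          if_neg (by simp)]
      · rw [heN0 s hs, map_zero]
  -- coefficients of d (yN 1)
  obtain ⟨c, hc⟩ : ∃ c : ℕ → ℂ, d (yN 1) = ∑ m ∈ Finset.Icc 1 (n-1), c m • yN m := by
    have hy1 : d (yN 1) ∈ Submodule.span ℂ (Set.range fun j : Fin (n - 1) => bas (Sum.inr j)) :=
      hdY _ (Submodule.subset_span ⟨⟨0, by omega⟩, (hyN 1 ⟨le_rfl, by omega⟩).symm⟩)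
    rw [Submodule.mem_span_range_iff_exists_fun] at hy1
    obtain ⟨f, hf⟩ := hy1
    refine ⟨fun m => if h : 1 ≤ m ∧ m ≤ n-1 then f ⟨m-1, by omega⟩ else 0, ?_⟩
    rw [← hf, ← fin_sum_icc (n-1)
      (fun m => (if h : 1 ≤ m ∧ m ≤ n-1 then f ⟨m-1, by omega⟩ else 0) • yN m)]
    apply Finset.sum_congr rfl
    intro j _
    have hj := j.2
    rw [dif_pos ⟨by omega, by omega⟩, hyN (↑j+1) ⟨by omega, by omega⟩]
    congr 1 <;> · congr 1; exact Fin.ext (by simp)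
  -- coefficients of d (eN 2)
  obtain ⟨b, hb⟩ : ∃ b : ℕ → ℂ, d (eN 2) = ∑ i ∈ Finset.Icc 1 n, b i • eN i := by
    have he2 : d (eN 2) ∈ Submodule.span ℂ (Set.range fun i : Fin n => bas (Sum.inl i)) :=
      hdE _ (Submodule.subset_span ⟨⟨1, by omega⟩, (heN 2 ⟨by omega, by omega⟩).symm⟩)
    rw [Submodule.mem_span_range_iff_exists_fun] at he2
    obtain ⟨f, hf⟩ := he2
    refine ⟨fun m => if h : 1 ≤ m ∧ m ≤ n then f ⟨m-1, by omega⟩ else 0, ?_⟩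
    rw [← hf, ← fin_sum_icc n
      (fun m => (if h : 1 ≤ m ∧ m ≤ n then f ⟨m-1, by omega⟩ else 0) • eN m)]
    apply Finset.sum_congr rfl
    intro j _
    have hj := j.2
    rw [dif_pos ⟨by omega, by omega⟩, heN (↑j+1) ⟨by omega, by omega⟩]
    congr 1 <;> · congr 1; exact Fin.ext (by simp)
  -- closed forms
  have hsplit1 : Finset.Icc 1 (n-1) = insert 1 (Finset.Icc 2 (n-1)) := by
    ext x; simp only [Finset.mem_Icc, Finset.mem_insert]; omega
  have F1 : d (eN 1) = (2 * c 1) • eN 1 + ∑ m ∈ Finset.Icc 2 (n-1), c m • eN (m+1) := by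
    have he1 : br (yN 1) (yN 1) = eN 1 := by rw [hyy1 1 le_rfl (by omega), if_pos rfl]
    have h := hder (yN 1) (yN 1)
    rw [he1, hc] at h
    rw [h]
    simp only [map_sum, map_smul, LinearMap.sum_apply, LinearMap.smul_apply]
    rw [hsplit1, Finset.sum_insert (by simp), Finset.sum_insert (by simp), he1]
    have s1 : ∑ m ∈ Finset.Icc 2 (n-1), c m • br (yN m) (yN 1)
        = ∑ m ∈ Finset.Icc 2 (n-1), c m • eN (m+1) := by
      refine Finset.sum_congr rfl fun m hm => ?_
      simp only [Finset.mem_Icc] at hm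
      rw [hyy1 m (by omega) (by omega), if_neg (by omega)]
    have s2 : ∑ m ∈ Finset.Icc 2 (n-1), c m • br (yN 1) (yN m) = 0 :=
      Finset.sum_eq_zero fun m hm => by
        simp only [Finset.mem_Icc] at hm
        rw [brYY0 1 m (by omega), smul_zero]
    rw [s1, s2]
    module
  have F2 : ∀ k, 3 ≤ k → k ≤ n → d (eN k) =
      (((2*(k-1) : ℕ) : ℂ) * c 1) • eN k + ∑ m ∈ Finset.Icc 2 (n-1), c m • eN (m+k-1) := by
    intro k hk3
    induction k, hk3 using Nat.le_induction with
    | base =>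
      intro _
      have he3 : br (eN 1) (eN 1) = eN 3 := by rw [hee1 1 le_rfl (by omega), if_pos rfl]
      have h := hder (eN 1) (eN 1)
      rw [he3, F1] at h
      rw [h]
      simp only [map_add, map_smul, map_sum, LinearMap.add_apply, LinearMap.sum_apply,
        LinearMap.smul_apply]
      rw [he3]
      have s1 : ∑ m ∈ Finset.Icc 2 (n-1), c m • br (eN (m+1)) (eN 1)
          = ∑ m ∈ Finset.Icc 2 (n-1), c m • eN (m+3-1) := by
        refine Finset.sum_congr rfl fun m hm => ?_
        simp only [Finset.mem_Icc] at hm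
        rw [brE1 (m+1) (by omega)]
        have : m+1+1 = m+3-1 := by omega
        rw [this]
      have s2 : ∑ m ∈ Finset.Icc 2 (n-1), c m • br (eN 1) (eN (m+1)) = 0 :=
        Finset.sum_eq_zero fun m hm => by
          simp only [Finset.mem_Icc] at hm
          rw [brEhi 1 (m+1) (by omega), smul_zero]
      rw [s1, s2]
      norm_num
      module
    | succ k hk ih =>
      intro hkn
      have ihh := ih (by omega)
      have hstep : br (eN k) (eN 1) = eN (k+1) := brE1 k (by omega)
      have h := hder (eN k) (eN 1)
      rw [hstep, ihh, F1] at h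
      rw [h]
      simp only [map_add, map_smul, map_sum, LinearMap.add_apply, LinearMap.sum_apply,
        LinearMap.smul_apply]
      have s1 : ∑ m ∈ Finset.Icc 2 (n-1), c m • br (eN (m+k-1)) (eN 1)
          = ∑ m ∈ Finset.Icc 2 (n-1), c m • eN (m+(k+1)-1) := by
        refine Finset.sum_congr rfl fun m hm => ?_
        simp only [Finset.mem_Icc] at hm
        rw [brE1 (m+k-1) (by omega)]
        have : m+k-1+1 = m+(k+1)-1 := by omega
        rw [this]
      have s2 : ∑ m ∈ Finset.Icc 2 (n-1), c m • br (eN k) (eN (m+1)) = 0 :=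
        Finset.sum_eq_zero fun m hm => by
          simp only [Finset.mem_Icc] at hm
          rw [brEhi k (m+1) (by omega), smul_zero]
      rw [s1, s2, hstep]
      have hcast : ((2*(k+1-1) : ℕ) : ℂ) = ((2*(k-1) : ℕ) : ℂ) + 2 := by
        have : 2*(k+1-1) = 2*(k-1) + 2 := by omega
        rw [this]
        push_cast
        ring
      rw [hcast]
      module
  have F5 : ∀ j, 1 ≤ j → j ≤ n - 1 → d (yN j) =
      (((2*j-1 : ℕ) : ℂ) * c 1) • yN j + ∑ m ∈ Finset.Icc 2 (n-1), c m • yN (m+j-1) := by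
    intro j hj1
    induction j, hj1 using Nat.le_induction with
    | base =>
      intro _
      rw [hc, hsplit1, Finset.sum_insert (by simp)]
      have s1 : ∑ m ∈ Finset.Icc 2 (n-1), c m • yN m
          = ∑ m ∈ Finset.Icc 2 (n-1), c m • yN (m+1-1) := by
        refine Finset.sum_congr rfl fun m hm => ?_
        have : m+1-1 = m := by omega
        rw [this]
      rw [s1]
      norm_num
    | succ j hj ih =>
      intro hjn
      have ihh := ih (by omega)
      have hstep : br (yN j) (eN 1) = yN (j+1) := brYE1 j (by omega)
      have h := hder (yN j) (eN 1)
      rw [hstep, ihh, F1] at h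
      rw [h]
      simp only [map_add, map_smul, map_sum, LinearMap.add_apply, LinearMap.sum_apply,
        LinearMap.smul_apply]
      have s1 : ∑ m ∈ Finset.Icc 2 (n-1), c m • br (yN (m+j-1)) (eN 1)
          = ∑ m ∈ Finset.Icc 2 (n-1), c m • yN (m+(j+1)-1) := by
        refine Finset.sum_congr rfl fun m hm => ?_
        simp only [Finset.mem_Icc] at hm
        rw [brYE1 (m+j-1) (by omega)]
        have : m+j-1+1 = m+(j+1)-1 := by omega
        rw [this]
      have s2 : ∑ m ∈ Finset.Icc 2 (n-1), c m • br (yN j) (eN (m+1)) = 0 :=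
        Finset.sum_eq_zero fun m hm => by
          simp only [Finset.mem_Icc] at hm
          rw [brYhi j (m+1) (by omega), smul_zero]
      rw [s1, s2, hstep]
      have hcast : ((2*(j+1)-1 : ℕ) : ℂ) = ((2*j-1 : ℕ) : ℂ) + 2 := by
        have : 2*(j+1)-1 = (2*j-1) + 2 := by omega
        rw [this]
        push_cast
        ring
      rw [hcast]
      module
  -- relation R1 (from d applied to [e2, y1] = ½ y2)
  have he2y : br (eN 2) (yN 1) = (1/2 : ℂ) • yN 2 := by
    rw [hey1 2 (by omega) (by omega), if_neg (by omega)]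
  have hsplit2 : Finset.Icc 1 n = insert 1 (Finset.Icc 2 n) := by
    ext x; simp only [Finset.mem_Icc, Finset.mem_insert]; omega
  have EQ1 : ∀ r, 1 ≤ r → r ≤ n - 1 →
      ∀ φ : V →ₗ[ℂ] ℂ, (∀ s, φ (yN s) = if s = r then 1 else 0) → (∀ s, φ (eN s) = 0) →
      φ (d ((1/2 : ℂ) • yN 2)) = φ (br (d (eN 2)) (yN 1) + br (eN 2) (d (yN 1))) := by
    intro r hr1 hr2 φ hφy hφe
    rw [← he2y, hder (eN 2) (yN 1)]
  have EQ1' : ∀ r, 1 ≤ r → r ≤ n - 1 →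
      ∀ φ : V →ₗ[ℂ] ℂ, (∀ s, φ (yN s) = if s = r then 1 else 0) → (∀ s, φ (eN s) = 0) →
      (1/2 : ℂ) * ((((2*2-1 : ℕ) : ℂ)) * c 1 * (if 2 = r then 1 else 0)
          + (if r ∈ Finset.Icc 3 n then c (r-1) else 0))
        = b 1 * ((1/2 : ℂ) * (if 2 = r then 1 else 0))
          + (if r ∈ Finset.Icc 2 n then b r * (1/2 : ℂ) else 0)
          + c 1 * ((1/2 : ℂ) * (if 2 = r then 1 else 0)) := by
    intro r hr1 hr2 φ hφy hφe
    have h2 := EQ1 r hr1 hr2 φ hφy hφe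
    rw [map_smul, F5 2 (by omega) (by omega), hb, hc] at h2
    simp only [map_add, map_smul, map_sum, LinearMap.sum_apply, LinearMap.smul_apply,
      smul_eq_mul, hφy, hφe, mul_zero, mul_one, add_zero, zero_add,
      Finset.sum_const_zero] at h2
    rw [hsplit2, Finset.sum_insert (by simp)] at h2
    rw [hey1 1 (by omega) (by omega), if_pos rfl] at h2
    have z2 : ∑ x ∈ Finset.Icc 2 n, b x * φ (br (eN x) (yN 1))
        = ∑ x ∈ Finset.Icc 2 n, b x * ((1/2 : ℂ) * (if x = r then 1 else 0)) := by
      refine Finset.sum_congr rfl fun x hx => ?_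
      simp only [Finset.mem_Icc] at hx
      rw [hey1 x (by omega) hx.2, if_neg (by omega), map_smul, hφy, smul_eq_mul]
    rw [z2] at h2
    rw [hsplit1, Finset.sum_insert (by simp)] at h2
    have z3 : ∑ x ∈ Finset.Icc 2 (n-1), c x * φ (br (eN 2) (yN x)) = 0 := by
      refine Finset.sum_eq_zero fun x hx => ?_
      simp only [Finset.mem_Icc] at hx
      rw [brEY0 2 x (by omega), map_zero, mul_zero]
    rw [z3] at h2
    rw [he2y, map_smul, hφy, smul_eq_mul] at h2
    have z1 : ∑ x ∈ Finset.Icc 2 (n-1), c x * (if x + 2 - 1 = r then 1 else 0)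
        = (if r ∈ Finset.Icc 3 n then c (r-1) else 0) := by
      by_cases hr : r ∈ Finset.Icc 3 n
      · simp only [Finset.mem_Icc] at hr
        rw [if_pos (by simp only [Finset.mem_Icc]; omega),
          Finset.sum_eq_single_of_mem (r-1)
            (by simp only [Finset.mem_Icc]; omega)
            (fun x hx hne => by
              simp only [Finset.mem_Icc] at hx
              rw [if_neg (by omega), mul_zero]),
          if_pos (by omega), mul_one]
      · simp only [Finset.mem_Icc] at hr
        rw [if_neg (by simp only [Finset.mem_Icc]; omega)]
        refine Finset.sum_eq_zero fun x hx => ?_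
        simp only [Finset.mem_Icc] at hx
        rw [if_neg (by omega), mul_zero]
    rw [z1] at h2
    have z4 : ∑ x ∈ Finset.Icc 2 n, b x * ((1/2 : ℂ) * (if x = r then 1 else 0))
        = (if r ∈ Finset.Icc 2 n then b r * (1/2 : ℂ) else 0) := by
      by_cases hr : r ∈ Finset.Icc 2 n
      · simp only [Finset.mem_Icc] at hr
        rw [if_pos (by simp only [Finset.mem_Icc]; omega),
          Finset.sum_eq_single_of_mem r (by simp only [Finset.mem_Icc]; omega)
            (fun x hx hne => by rw [if_neg hne, mul_zero, mul_zero]),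
          if_pos rfl, mul_one]
      · simp only [Finset.mem_Icc] at hr
        rw [if_neg (by simp only [Finset.mem_Icc]; omega)]
        refine Finset.sum_eq_zero fun x hx => ?_
        simp only [Finset.mem_Icc] at hx
        rw [if_neg (by omega), mul_zero, mul_zero]
    rw [z4] at h2
    linear_combination h2
  have R1a : b 2 = 2 * c 1 - b 1 := by
    obtain ⟨φ, hφy, hφe⟩ := coordY 2 (by omega) (by omega)
    have h2 := EQ1' 2 (by omega) (by omega) φ hφy hφe
    rw [if_pos rfl, if_neg (show (2:ℕ) ∉ Finset.Icc 3 n by simp only [Finset.mem_Icc]; omega),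
      if_pos (show (2:ℕ) ∈ Finset.Icc 2 n by simp only [Finset.mem_Icc]; omega)] at h2
    norm_num at h2
    linear_combination -2 * h2
  have R1b : ∀ r, 3 ≤ r → r ≤ n - 1 → b r = c (r-1) := by
    intro r hr3 hrn
    obtain ⟨φ, hφy, hφe⟩ := coordY r (by omega) (by omega)
    have h2 := EQ1' r (by omega) (by omega) φ hφy hφe
    rw [if_neg (show ¬(2 = r) by omega),
      if_pos (show r ∈ Finset.Icc 3 n by simp only [Finset.mem_Icc]; omega),
      if_pos (show r ∈ Finset.Icc 2 n by simp only [Finset.mem_Icc]; omega)] at h2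
    linear_combination -2 * h2
  -- relation from d applied to [e1, e2]
  have hsplit3 : Finset.Icc 2 n = insert 2 (Finset.Icc 3 n) := by
    ext x; simp only [Finset.mem_Icc, Finset.mem_insert]; omega
  have hsplit4 : Finset.Icc 4 n = insert n (Finset.Icc 4 (n-1)) := by
    ext x; simp only [Finset.mem_Icc, Finset.mem_insert]; omega
  have hM1 : d ((∑ k ∈ Finset.Icc 4 (n - 1), α k • eN k) + θ • eN n)
      = br (d (eN 1)) (eN 2) + br (eN 1) (d (eN 2)) := by
    rw [← hee2a, hder]
  have Rb1 : b 1 = 0 := by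
    obtain ⟨φ, hφe, hφy⟩ := coordE 3 (by omega) (by omega)
    have h2 := congrArg φ hM1
    rw [F1, hb] at h2
    simp only [map_add, map_smul, map_sum, LinearMap.add_apply, LinearMap.sum_apply,
      LinearMap.smul_apply, smul_eq_mul] at h2
    have zA : ∑ k ∈ Finset.Icc 4 (n-1), α k * φ (d (eN k)) = 0 := by
      refine Finset.sum_eq_zero fun k hk => ?_
      simp only [Finset.mem_Icc] at hk
      have : φ (d (eN k)) = 0 := by
        rw [F2 k (by omega) (by omega)]
        simp only [map_add, map_smul, map_sum, smul_eq_mul, hφe]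
        rw [if_neg (by omega),
          Finset.sum_eq_zero (fun m hm => by
            simp only [Finset.mem_Icc] at hm
            rw [if_neg (by omega), mul_zero])]
        ring
      rw [this, mul_zero]
    have zB : φ (d (eN n)) = 0 := by
      rw [F2 n (by omega) le_rfl]
      simp only [map_add, map_smul, map_sum, smul_eq_mul, hφe]
      rw [if_neg (by omega),
        Finset.sum_eq_zero (fun m hm => by
          simp only [Finset.mem_Icc] at hm
          rw [if_neg (by omega), mul_zero])]
      ring
    have zC : φ (br (eN 1) (eN 2)) = 0 := by
      rw [hee2a]
      simp only [map_add, map_smul, map_sum, smul_eq_mul, hφe]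
      rw [Finset.sum_eq_zero (fun k hk => by
          simp only [Finset.mem_Icc] at hk
          rw [if_neg (by omega), mul_zero]),
        if_neg (by omega)]
      ring
    have zD : ∑ m ∈ Finset.Icc 2 (n-1), c m * φ (br (eN (m+1)) (eN 2)) = 0 := by
      refine Finset.sum_eq_zero fun m hm => ?_
      simp only [Finset.mem_Icc] at hm
      have : φ (br (eN (m+1)) (eN 2)) = 0 := by
        rw [hee2b (m+1) (by omega) (by omega)]
        simp only [map_sum, map_smul, smul_eq_mul, hφe]
        refine Finset.sum_eq_zero fun k hk => ?_
        simp only [Finset.mem_Icc] at hk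
        rw [if_neg (by omega), mul_zero]
      rw [this, mul_zero]
    rw [zA, zB, zC, zD] at h2
    rw [hsplit2, Finset.sum_insert (by simp), hsplit3, Finset.sum_insert (by simp)] at h2
    rw [hee1 1 (by omega) (by omega), if_pos rfl] at h2
    rw [zC] at h2
    have zE : ∑ i ∈ Finset.Icc 3 n, b i * φ (br (eN 1) (eN i)) = (0:ℂ) := by
      refine Finset.sum_eq_zero fun i hi => ?_
      simp only [Finset.mem_Icc] at hi
      rw [brEhi 1 i (by omega), map_zero, mul_zero]
    rw [zE] at h2
    rw [hφe, if_pos rfl] at h2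
    linear_combination -h2
  have Rθ : 2 * c 1 * θ + b 2 * θ = ((2*(n-1) : ℕ) : ℂ) * c 1 * θ := by
    obtain ⟨φ, hφe, hφy⟩ := coordE n (by omega) le_rfl
    have h2 := congrArg φ hM1
    rw [F1, hb] at h2
    simp only [map_add, map_smul, map_sum, LinearMap.add_apply, LinearMap.sum_apply,
      LinearMap.smul_apply, smul_eq_mul] at h2
    have zA : ∑ k ∈ Finset.Icc 4 (n-1), α k * φ (d (eN k))
        = ∑ k ∈ Finset.Icc 4 (n-1), α k *
            (∑ m ∈ Finset.Icc 2 (n-1), c m * (if m+k-1 = n then 1 else 0)) := by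
      refine Finset.sum_congr rfl fun k hk => ?_
      simp only [Finset.mem_Icc] at hk
      have : φ (d (eN k)) = ∑ m ∈ Finset.Icc 2 (n-1), c m * (if m+k-1 = n then 1 else 0) := by
        rw [F2 k (by omega) (by omega)]
        simp only [map_add, map_smul, map_sum, smul_eq_mul, hφe]
        rw [if_neg (by omega)]
        ring
      rw [this]
    have zB : φ (d (eN n)) = ((2*(n-1) : ℕ) : ℂ) * c 1 := by
      rw [F2 n (by omega) le_rfl]
      simp only [map_add, map_smul, map_sum, smul_eq_mul, hφe]
      rw [Finset.sum_eq_zero (fun m hm => by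
          simp only [Finset.mem_Icc] at hm
          rw [if_neg (by omega), mul_zero])]
      simp
    have zC : φ (br (eN 1) (eN 2)) = θ := by
      rw [hee2a]
      simp only [map_add, map_smul, map_sum, smul_eq_mul, hφe]
      rw [Finset.sum_eq_zero (fun k hk => by
          simp only [Finset.mem_Icc] at hk
          rw [if_neg (by omega), mul_zero])]
      simp
    have zD : ∑ m ∈ Finset.Icc 2 (n-1), c m * φ (br (eN (m+1)) (eN 2))
        = ∑ k ∈ Finset.Icc 4 (n-1), α k *
            (∑ m ∈ Finset.Icc 2 (n-1), c m * (if m+k-1 = n then 1 else 0)) := by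
      rw [← swap_sum (Finset.Icc 2 (n-1)) (Finset.Icc 4 (n-1)) c α
        (fun m k => if m+k-1 = n then 1 else 0)]
      refine Finset.sum_congr rfl fun m hm => ?_
      simp only [Finset.mem_Icc] at hm
      have : φ (br (eN (m+1)) (eN 2))
          = ∑ k ∈ Finset.Icc 4 (n-1), α k * (if m+k-1 = n then 1 else 0) := by
        rw [hee2b (m+1) (by omega) (by omega)]
        simp only [map_sum, map_smul, smul_eq_mul, hφe]
        rw [hsplit4, Finset.sum_insert (by simp only [Finset.mem_Icc]; omega)]
        rw [if_neg (by omega), mul_zero, zero_add]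
        refine Finset.sum_congr rfl fun k hk => ?_
        simp only [Finset.mem_Icc] at hk
        rw [show m+1+k-2 = m+k-1 from by omega]
      rw [this]
    rw [zA, zB, zC, zD] at h2
    rw [hsplit2, Finset.sum_insert (by simp), hsplit3, Finset.sum_insert (by simp)] at h2
    rw [hee1 1 (by omega) (by omega), if_pos rfl] at h2
    rw [zC] at h2
    have zE : ∑ i ∈ Finset.Icc 3 n, b i * φ (br (eN 1) (eN i)) = (0:ℂ) := by
      refine Finset.sum_eq_zero fun i hi => ?_
      simp only [Finset.mem_Icc] at hi
      rw [brEhi 1 i (by omega), map_zero, mul_zero]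
    rw [zE] at h2
    rw [hφe, if_neg (by omega)] at h2
    linear_combination -h2
  -- relation from d applied to [e2, e2]
  have Rα : ∀ r, 4 ≤ r → r ≤ n → 2 * b 2 * α r = α r * (((2*(r-1) : ℕ) : ℂ) * c 1) := by
    intro r hr4 hrn
    obtain ⟨φ, hφe, hφy⟩ := coordE r (by omega) hrn
    have hM2 : d (∑ k ∈ Finset.Icc 4 n, α k • eN (2 + k - 2))
        = br (d (eN 2)) (eN 2) + br (eN 2) (d (eN 2)) := by
      rw [← hee2b 2 le_rfl (by omega), hder]
    have h2 := congrArg φ hM2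
    rw [hb] at h2
    simp only [map_add, map_smul, map_sum, LinearMap.add_apply, LinearMap.sum_apply,
      LinearMap.smul_apply, smul_eq_mul] at h2
    -- e2e2 coordinate value
    have ze22 : φ (br (eN 2) (eN 2)) = α r := by
      rw [hee2b 2 le_rfl (by omega)]
      simp only [map_sum, map_smul, smul_eq_mul, hφe]
      rw [Finset.sum_eq_single_of_mem r (by simp only [Finset.mem_Icc]; omega)
        (fun x hx hne => by
          simp only [Finset.mem_Icc] at hx
          rw [if_neg (by omega), mul_zero]),
        if_pos (by omega), mul_one]
    -- LHS
    have zL : ∑ k ∈ Finset.Icc 4 n, α k * φ (d (eN (2 + k - 2)))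
        = α r * (((2*(r-1) : ℕ) : ℂ) * c 1)
          + ∑ k ∈ Finset.Icc 4 n, α k *
              (∑ m ∈ Finset.Icc 2 (n-1), c m * (if m+k-1 = r then 1 else 0)) := by
      have e1 : ∀ k ∈ Finset.Icc 4 n, α k * φ (d (eN (2 + k - 2)))
          = α k * ((((2*(k-1) : ℕ) : ℂ) * c 1) * (if k = r then 1 else 0))
            + α k * (∑ m ∈ Finset.Icc 2 (n-1), c m * (if m+k-1 = r then 1 else 0)) := by
        intro k hk
        simp only [Finset.mem_Icc] at hk
        rw [show 2 + k - 2 = k from by omega, F2 k (by omega) (by omega)]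
        simp only [map_add, map_smul, map_sum, smul_eq_mul, hφe]
        ring
      rw [Finset.sum_congr rfl e1, Finset.sum_add_distrib]
      congr 1
      rw [Finset.sum_eq_single_of_mem r (by simp only [Finset.mem_Icc]; omega)
        (fun x hx hne => by rw [if_neg hne, mul_zero, mul_zero]),
        if_pos rfl, mul_one]
    -- cross term on the RHS
    have zcross : ∑ i ∈ Finset.Icc 3 n, b i * φ (br (eN i) (eN 2))
        = ∑ k ∈ Finset.Icc 4 n, α k *
            (∑ m ∈ Finset.Icc 2 (n-1), c m * (if m+k-1 = r then 1 else 0)) := by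
      have hshift := sum_shift1 2 (n-1) (fun i => b i * φ (br (eN i) (eN 2)))
      rw [show n-1+1 = n from by omega] at hshift
      rw [← hshift,
        ← swap_sum (Finset.Icc 2 (n-1)) (Finset.Icc 4 n) c α
          (fun m k => if m+k-1 = r then 1 else 0)]
      refine Finset.sum_congr rfl fun m hm => ?_
      simp only [Finset.mem_Icc] at hm
      have hval : φ (br (eN (m+1)) (eN 2))
          = ∑ k ∈ Finset.Icc 4 n, α k * (if m+k-1 = r then 1 else 0) := by
        rw [hee2b (m+1) (by omega) (by omega)]
        simp only [map_sum, map_smul, smul_eq_mul, hφe]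
        refine Finset.sum_congr rfl fun k hk => ?_
        rw [show m+1+k-2 = m+k-1 from by omega]
      rw [hval]
      by_cases hm2 : m ≤ n - 2
      · rw [R1b (m+1) (by omega) (by omega), show m+1-1 = m from by omega]
      · have hm1 : m = n - 1 := by omega
        rw [Finset.sum_eq_zero (fun k hk => by
          simp only [Finset.mem_Icc] at hk
          rw [if_neg (by omega), mul_zero]), mul_zero, mul_zero]
    -- assemble
    rw [zL] at h2
    rw [hsplit2, Finset.sum_insert (by simp), Finset.sum_insert (by simp),
      hsplit3, Finset.sum_insert (by simp), Finset.sum_insert (by simp)] at h2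
    rw [ze22, zcross] at h2
    rw [Rb1, zero_mul, zero_mul] at h2
    have zE2 : ∑ i ∈ Finset.Icc 3 n, b i * φ (br (eN 2) (eN i)) = (0:ℂ) := by
      refine Finset.sum_eq_zero fun i hi => ?_
      simp only [Finset.mem_Icc] at hi
      rw [brEhi 2 i (by omega), map_zero, mul_zero]
    rw [zE2] at h2
    linear_combination -h2
  -- conclude c 1 = 0
  have hb2 : b 2 = 2 * c 1 := by rw [R1a, Rb1]; ring
  have hc1 : c 1 = 0 := by
    rcases hnz with ⟨i, h4i, hin, hαi⟩ | hθ
    · have h := Rα i h4i hin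
      rw [hb2] at h
      have hcast : ((2*(i-1) : ℕ) : ℂ) = 2*(i:ℂ) - 2 := by
        push_cast [Nat.cast_sub (by omega : 1 ≤ i)]
        ring
      rw [hcast] at h
      have key : α i * c 1 * (2*(i:ℂ) - 6) = 0 := by linear_combination -h
      rcases mul_eq_zero.1 key with h' | h'
      · rcases mul_eq_zero.1 h' with h'' | h''
        · exact absurd h'' hαi
        · exact h''
      · exfalso
        have : (i:ℂ) = 3 := by linear_combination h' / 2
        have : i = 3 := by exact_mod_cast this
        omega
    · have h := Rθ
      rw [hb2] at h
      have hcast : ((2*(n-1) : ℕ) : ℂ) = 2*(n:ℂ) - 2 := by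
        push_cast [Nat.cast_sub (by omega : 1 ≤ n)]
        ring
      rw [hcast] at h
      have key : ((n:ℂ) - 3) * θ * c 1 = 0 := by linear_combination -h/2
      rcases mul_eq_zero.1 key with h' | h'
      · exact absurd h' hθ
      · exact h'
  -- filtration
  set E : ℕ → Submodule ℂ V := fun t => Submodule.span ℂ (eN '' Set.Ici t) with hE
  set Y : ℕ → Submodule ℂ V := fun t => Submodule.span ℂ (yN '' Set.Ici t) with hY
  have memE : ∀ s t, t ≤ s → eN s ∈ E t :=
    fun s t h => Submodule.subset_span ⟨s, h, rfl⟩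
  have memY : ∀ s t, t ≤ s → yN s ∈ Y t :=
    fun s t h => Submodule.subset_span ⟨s, h, rfl⟩
  have monoE : ∀ t t', t ≤ t' → E t' ≤ E t :=
    fun t t' h => Submodule.span_mono (Set.image_mono (Set.Ici_subset_Ici.2 h))
  have monoY : ∀ t t', t ≤ t' → Y t' ≤ Y t :=
    fun t t' h => Submodule.span_mono (Set.image_mono (Set.Ici_subset_Ici.2 h))
  have dE : ∀ i, d (eN i) ∈ E (i+1) := by
    intro i
    by_cases h0 : i = 0
    · subst h0; rw [heN0 0 (by omega), map_zero]; exact zero_mem _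
    by_cases h1 : i = 1
    · subst h1
      rw [F1, hc1, mul_zero, zero_smul, zero_add]
      refine Submodule.sum_mem _ fun m hm => ?_
      simp only [Finset.mem_Icc] at hm
      exact Submodule.smul_mem _ _ (memE (m+1) 2 (by omega))
    by_cases h2 : i = 2
    · subst h2
      rw [hb]
      refine Submodule.sum_mem _ fun m hm => ?_
      simp only [Finset.mem_Icc] at hm
      by_cases hm1 : m = 1
      · subst hm1; rw [Rb1, zero_smul]; exact zero_mem _
      by_cases hm2 : m = 2
      · subst hm2; rw [hb2, hc1, mul_zero, zero_smul]; exact zero_mem _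
      · exact Submodule.smul_mem _ _ (memE m 3 (by omega))
    by_cases h3 : i ≤ n
    · rw [F2 i (by omega) h3, hc1, mul_zero, zero_smul, zero_add]
      refine Submodule.sum_mem _ fun m hm => ?_
      simp only [Finset.mem_Icc] at hm
      exact Submodule.smul_mem _ _ (memE (m+i-1) (i+1) (by omega))
    · rw [eN0 i (by omega), map_zero]; exact zero_mem _
  have dY : ∀ j, d (yN j) ∈ Y (j+1) := by
    intro j
    by_cases h0 : 1 ≤ j ∧ j ≤ n - 1
    · rw [F5 j h0.1 h0.2, hc1, mul_zero, zero_smul, zero_add]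
      refine Submodule.sum_mem _ fun m hm => ?_
      simp only [Finset.mem_Icc] at hm
      exact Submodule.smul_mem _ _ (memY (m+j-1) (j+1) (by omega))
    · rw [hyN0 j h0, map_zero]; exact zero_mem _
  have dE' : ∀ t v, v ∈ E t → d v ∈ E (t+1) := by
    intro t v hv
    refine Submodule.span_induction ?_ ?_ ?_ ?_ hv
    · rintro x ⟨s, hs, rfl⟩
      exact monoE (t+1) (s+1) (by exact Nat.succ_le_succ hs) (dE s)
    · rw [map_zero]; exact zero_mem _
    · intro x y _ _ hx hy; rw [map_add]; exact add_mem hx hy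
    · intro a x _ hx; rw [map_smul]; exact Submodule.smul_mem _ _ hx
  have dY' : ∀ t v, v ∈ Y t → d v ∈ Y (t+1) := by
    intro t v hv
    refine Submodule.span_induction ?_ ?_ ?_ ?_ hv
    · rintro x ⟨s, hs, rfl⟩
      exact monoY (t+1) (s+1) (by exact Nat.succ_le_succ hs) (dY s)
    · rw [map_zero]; exact zero_mem _
    · intro x y _ _ hx hy; rw [map_add]; exact add_mem hx hy
    · intro a x _ hx; rw [map_smul]; exact Submodule.smul_mem _ _ hx
  have iterE : ∀ N t v, v ∈ E t → (d ^ N) v ∈ E (t + N) := by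
    intro N
    induction N with
    | zero => intro t v hv; simpa using hv
    | succ N ih =>
      intro t v hv
      rw [pow_succ, Module.End.mul_apply, show t + (N+1) = (t+1) + N from by omega]
      exact ih (t+1) (d v) (dE' t v hv)
  have iterY : ∀ N t v, v ∈ Y t → (d ^ N) v ∈ Y (t + N) := by
    intro N
    induction N with
    | zero => intro t v hv; simpa using hv
    | succ N ih =>
      intro t v hv
      rw [pow_succ, Module.End.mul_apply, show t + (N+1) = (t+1) + N from by omega]
      exact ih (t+1) (d v) (dY' t v hv)
  have Ebot : ∀ t, n < t → E t = ⊥ := by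
    intro t ht
    rw [hE]
    rw [Submodule.span_eq_bot]
    rintro x ⟨s, hs, rfl⟩
    simp only [Set.mem_Ici] at hs
    exact eN0 s (by omega)
  have Ybot : ∀ t, n - 1 < t → Y t = ⊥ := by
    intro t ht
    rw [hY]
    rw [Submodule.span_eq_bot]
    rintro x ⟨s, hs, rfl⟩
    simp only [Set.mem_Ici] at hs
    exact yN0 s (by omega)
  refine ⟨n + 1, Module.Basis.ext bas ?_⟩
  intro s
  rw [LinearMap.zero_apply]
  rcases s with i | j
  · have hbas : bas (Sum.inl i) = eN (↑i + 1) := by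
      rw [heN (↑i+1) ⟨by omega, by omega⟩]
      exact congrArg bas (congrArg Sum.inl (Fin.ext (by simp)))
    rw [hbas]
    have hm0 := memE (↑i+1) (↑i+1) (Nat.le_refl _)
    have hm := iterE (n+1) (↑i+1) (eN (↑i+1)) hm0
    rw [Ebot (↑i+1+(n+1)) (by omega), Submodule.mem_bot] at hm
    exact hm
  · have hbas : bas (Sum.inr j) = yN (↑j + 1) := by
      rw [hyN (↑j+1) ⟨by omega, by omega⟩]
      exact congrArg bas (congrArg Sum.inr (Fin.ext (by simp)))
    rw [hbas]
    have hm0 := memY (↑j+1) (↑j+1) (Nat.le_refl _)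
    have hm := iterY (n+1) (↑j+1) (yN (↑j+1)) hm0
    rw [Ybot (↑j+1+(n+1)) (by omega), Submodule.mem_bot] at hm
    exact hm
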